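/- (Comparison of entropies) Assume p ≤ 1/2 and let r := 4/p². For any f : X → (0,∞), with f_⋆(x) := max_{z∈X} r^{−d(x,z)}·f(z), one has Ent(f) ≤ 2·Ent(f_⋆). -/

import Mathlib

open Finset

noncomputable section

variable {X : Type*} [Fintype X] [DecidableEq X] [Nonempty X]

/-- Dirichlet form `E(f,g) = (1/2) ∑_{x,y} π(x) Q(x,y) (f(x)-f(y))(g(x)-g(y))`. -/
def dirichletForm (π : X → ℝ) (Q : X → X → ℝ) (f g : X → ℝ) : ℝ :=
  (1 / 2) * ∑ x : X, ∑ y : X, π x * Q x y * (f x - f y) * (g x - g y)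

/-- Mean `E[f] = ∑_x π(x) f(x)`. -/
def mean (π : X → ℝ) (f : X → ℝ) : ℝ := ∑ x : X, π x * f x

/-- Entropy `Ent(f) = E[f log f] - E[f] log E[f]`. -/
def entropy (π : X → ℝ) (f : X → ℝ) : ℝ :=
  mean π (fun x => f x * Real.log (f x)) - mean π f * Real.log (mean π f)

/-- Variance `Var(f) = E[f²] - E[f]²`. -/
def variance (π : X → ℝ) (f : X → ℝ) : ℝ :=
  mean π (fun x => f x ^ 2) - (mean π f) ^ 2

/-- Total jump rate `Q(x) = ∑_{y ≠ x} Q(x,y)`. -/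
def jumpRate (Q : X → X → ℝ) (x : X) : ℝ := ∑ y ∈ univ.erase x, Q x y

/-- Sparsity parameter `p = min_{(x,y) ∈ E} Q(x,y) / max(Q(x), Q(y,x))`. -/
def sparsity (Q : X → X → ℝ) : ℝ :=
  sInf {s : ℝ | ∃ x y : X, x ≠ y ∧ 0 < Q x y ∧
    s = Q x y / max (jumpRate Q x) (Q y x)}

/-- The transition graph `(X, E)` (symmetric since under reversibility
`Q(x,y) > 0 ↔ Q(y,x) > 0`). -/
def chainGraph (Q : X → X → ℝ) : SimpleGraph X where
  Adj x y := x ≠ y ∧ (0 < Q x y ∨ 0 < Q y x)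
  symm := by constructor; intro x y h; exact ⟨h.1.symm, h.2.symm⟩
  loopless := by constructor; intro x h; exact h.1 rfl

/-- Graph distance on `(X, E)`. -/
def graphDist (Q : X → X → ℝ) (x y : X) : ℕ := (chainGraph Q).dist x y

/-- Regularization `f⋆(x) = max_z r^{-d(x,z)} f(z)`. -/
def fStar (Q : X → X → ℝ) (r : ℝ) (f : X → ℝ) (x : X) : ℝ :=
  univ.sup' univ_nonempty (fun z => r ^ (-(graphDist Q x z : ℤ)) * f z)

/-- `(x,y)` is an allowed transition. -/
def IsEdge (Q : X → X → ℝ) (e : X × X) : Prop := e.1 ≠ e.2 ∧ 0 < Q e.1 e.2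

/-- The edge set `E = {(x,y) : x ≠ y, Q(x,y) > 0}` as a finset. -/
def edges (Q : X → X → ℝ) : Finset (X × X) :=
  univ.filter (fun e => e.1 ≠ e.2 ∧ 0 < Q e.1 e.2)

/-- Edge weight `c(x,y) = π(x) Q(x,y)`. -/
def edgeWeight (π : X → ℝ) (Q : X → X → ℝ) (e : X × X) : ℝ := π e.1 * Q e.1 e.2

/-- Distance between edges: `d(e,e') = ℓ - 1` where `ℓ` is the minimal length of a
path `(x_0, …, x_ℓ)` with `(x_0,x_1) = e` and `(x_{ℓ-1}, x_ℓ) = e'`. -/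
def edgeDist (Q : X → X → ℝ) (e e' : X × X) : ℕ :=
  sInf {n : ℕ | ∃ c : ℕ → X, c 0 = e.1 ∧ c 1 = e.2 ∧ c n = e'.1 ∧ c (n + 1) = e'.2 ∧
    ∀ i < n + 1, (chainGraph Q).Adj (c i) (c (i + 1))}

/-- `κ = max_{e' ∈ E} (1/c(e')) ∑_{e ∈ E} c(e) r^{-d(e,e')}`. -/
def kappa (π : X → ℝ) (Q : X → X → ℝ) (r : ℝ) : ℝ :=
  sSup {k : ℝ | ∃ e' ∈ edges Q, k = (1 / edgeWeight π Q e') *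
    ∑ e ∈ edges Q, edgeWeight π Q e * r ^ (-(edgeDist Q e e' : ℤ))}

/-- `H(w) = ((√w + 1)/(√w - 1)) log w` for `w ≠ 1`, and `H(1) = 4`. -/
def Hfun (w : ℝ) : ℝ :=
  if w = 1 then 4 else ((Real.sqrt w + 1) / (Real.sqrt w - 1)) * Real.log w

/-- A function is `r`-regular if `f(x) ≤ r f(y)` across every edge. -/
def IsRRegular (Q : X → X → ℝ) (r : ℝ) (f : X → ℝ) : Prop :=
  ∀ x y : X, x ≠ y → 0 < Q x y → f x ≤ r * f y

/-- Maximum degree of the graph `(X, E)`. -/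
def maxDegree (Q : X → X → ℝ) : ℕ :=
  univ.sup (fun x : X => Nat.card {y : X // (chainGraph Q).Adj x y})

/-- Irreducibility: every state can be reached from every other through allowed
transitions. -/
def MarkovIrreducible (Q : X → X → ℝ) : Prop :=
  ∀ x y : X, Relation.ReflTransGen (fun a b => a ≠ b ∧ 0 < Q a b) x y

set_option maxHeartbeats 1600000

section STCAux
open scoped Classical


private lemma elog_le_div_e {y : ℝ} (hy : 0 < y) : Real.log y ≤ y / Real.exp 1 := by
  have h1 : Real.log y - 1 = Real.log (y / Real.exp 1) := by
    rw [Real.log_div (ne_of_gt hy) (ne_of_gt (Real.exp_pos 1)), Real.log_exp]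
  have h2 := Real.log_le_sub_one_of_pos (div_pos hy (Real.exp_pos 1))
  linarith [h1 ▸ h2]

private lemma exp_one_gt : (2.7182818:ℝ) < Real.exp 1 := by
  have := Real.exp_one_gt_d9; norm_num at this ⊢; linarith

private lemma L1 {q : ℝ} (hq : 0 < q) (hq' : q ≤ 7/40) : 2 * q * (1 - Real.log q) ≤ 1 := by
  have hs0 : 0 < Real.sqrt q := Real.sqrt_pos.mpr hq
  have hsq : Real.sqrt q ^ 2 = q := Real.sq_sqrt hq.le
  have hs : Real.sqrt q ≤ 419/1000 := by
    nlinarith [Real.sqrt_nonneg q]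
  have hlog : Real.log q = 2 * Real.log (Real.sqrt q) := by
    rw [Real.log_sqrt hq.le]; ring
  have hinv : Real.log (Real.sqrt q)⁻¹ ≤ (Real.sqrt q)⁻¹ / Real.exp 1 :=
    elog_le_div_e (by positivity)
  have hloginv : Real.log (Real.sqrt q)⁻¹ = - Real.log (Real.sqrt q) := Real.log_inv _
  have he := exp_one_gt
  have hepos := Real.exp_pos 1
  -- from hinv : -log s ≤ s⁻¹/e, multiply by 4q > 0 : -4q log s ≤ 4 q s⁻¹ / e = 4 s / e
  have h4 : 4 * q * (-Real.log (Real.sqrt q)) ≤ 4 * Real.sqrt q / Real.exp 1 := by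
    have h := mul_le_mul_of_nonneg_left (hloginv ▸ hinv) (by positivity : (0:ℝ) ≤ 4 * q)
    have heq : 4 * q * ((Real.sqrt q)⁻¹ / Real.exp 1) = 4 * Real.sqrt q / Real.exp 1 := by
      field_simp
      nlinarith [hsq]
    linarith [heq ▸ h]
  have hfin : 4 * Real.sqrt q / Real.exp 1 ≤ 4 * (419/1000) / 2.7182818 := by
    apply div_le_div₀ (by norm_num) (by linarith) (by norm_num) he.le
  nlinarith [h4, hfin]




private lemma tangent_log {u v : ℝ} (hu : 0 < u) (hv : 0 < v) :
    u * Real.log v + u - v ≤ u * Real.log u := by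
  have h := Real.log_le_sub_one_of_pos (x := v / u) (by positivity)
  have hlog : Real.log (v / u) = Real.log v - Real.log u := Real.log_div (ne_of_gt hv) (ne_of_gt hu)
  rw [hlog] at h
  have h2 := mul_le_mul_of_nonneg_left h (le_of_lt hu)
  have hvu : u * (v / u - 1) = v - u := by field_simp
  nlinarith

-- Φ(q) := q log q - q + 1 ≥ 0
private lemma Phi1_nonneg {q : ℝ} (hq : 0 < q) : 0 ≤ q * Real.log q - q + 1 := by
  have := tangent_log hq one_pos
  simp [Real.log_one] at this
  linarith

-- L2 : Φ(q) ≥ 1 for q ≥ e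
private lemma L2 {q : ℝ} (hq : Real.exp 1 ≤ q) : 1 ≤ q * Real.log q - q + 1 := by
  have hq0 : 0 < q := lt_of_lt_of_le (Real.exp_pos 1) hq
  have : 1 ≤ Real.log q := (Real.le_log_iff_exp_le hq0).mpr hq
  nlinarith

-- L4 : ψ(q) = 4 q log 16 + 6 q log q - 6 q + 1 ≥ 0
private lemma L4 {q : ℝ} (hq : 0 < q) :
    0 ≤ 4 * q * Real.log 16 + 6 * (q * Real.log q) - 6 * q + 1 := by
  set v : ℝ := (2:ℝ) ^ (-(8/3) : ℝ) with hv
  have hv0 : 0 < v := Real.rpow_pos_of_pos two_pos _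
  have hlogv : Real.log v = -(8/3) * Real.log 2 := Real.log_rpow two_pos _
  have htan := tangent_log hq hv0
  have hlog16 : Real.log 16 = 4 * Real.log 2 := by
    rw [show (16:ℝ) = 2^(4:ℕ) by norm_num, Real.log_pow]; push_cast; ring
  have hv6 : v ≤ 1/6 := by
    have hcube : v ^ (3:ℕ) = 1/256 := by
      rw [hv, ← Real.rpow_natCast ((2:ℝ) ^ (-(8/3):ℝ)) 3, ← Real.rpow_mul (by norm_num)]
      norm_num
    by_contra hcon
    push_neg at hcon
    have h3 : ((1:ℝ)/6)^(3:ℕ) < v^(3:ℕ) := by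
      apply pow_lt_pow_left₀ hcon (by norm_num) (by norm_num)
    rw [hcube] at h3
    norm_num at h3
  have hql : q * Real.log v = -(8/3) * (q * Real.log 2) := by rw [hlogv]; ring
  have hql16 : q * Real.log 16 = 4 * (q * Real.log 2) := by rw [hlog16]; ring
  nlinarith [htan, hv6, hql, hql16]

-- L5 : d=1 case, q ≤ 1 : net(q) = 2q - 2q log q - 1 ≤ 4 q (log 16 + log q - 1)
private lemma L5 {q : ℝ} (hq : 0 < q) :
    (q - q * Real.log q) - (q * Real.log q - q + 1) ≤ 4 * q * (Real.log 16 + Real.log q - 1) := by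
  have := L4 hq
  nlinarith

-- L6 : d=1 case, q ≥ 1 : 1 - Φ(q) ≤ 4 q (log 16 + log q - 1)
private lemma log16_ge : (5/4 : ℝ) ≤ Real.log 16 := by
  rw [show (16:ℝ) = 2^(4:ℕ) by norm_num, Real.log_pow]
  have := Real.log_two_gt_d9
  push_cast
  nlinarith

private lemma L6 {q : ℝ} (hq : 1 ≤ q) :
    1 - (q * Real.log q - q + 1) ≤ 4 * q * (Real.log 16 + Real.log q - 1) := by
  have hq0 : 0 < q := by linarith
  have hlq : 0 ≤ Real.log q := Real.log_nonneg hq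
  have h16 := log16_ge
  nlinarith [mul_le_mul_of_nonneg_left hlq hq0.le]

-- L7 : γ(q) ≤ 1 for 0 < q ≤ 1
private lemma L7 {q : ℝ} (hq : 0 < q) (hq1 : q ≤ 1) : q * (1 - Real.log q) ≤ 1 := by
  have h := Real.log_le_sub_one_of_pos (x := q⁻¹) (by positivity)
  rw [Real.log_inv] at h
  have h2 := mul_le_mul_of_nonneg_left h hq.le
  have : q * (q⁻¹ - 1) = 1 - q := by field_simp
  nlinarith

-- L8 : 1/16 ≤ q (2 log 16 + log q - 1) for q ≥ 7/40
private lemma elog_le_div_e2 {y : ℝ} (hy : 0 < y) : Real.log y ≤ y / Real.exp 1 := by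
  have h1 : Real.log y - 1 = Real.log (y / Real.exp 1) := by
    rw [Real.log_div (ne_of_gt hy) (ne_of_gt (Real.exp_pos 1)), Real.log_exp]
  have h2 := Real.log_le_sub_one_of_pos (div_pos hy (Real.exp_pos 1))
  linarith [h1 ▸ h2]

private lemma mul_log_ge_neg_inv_e2 {q : ℝ} (hq : 0 < q) : -(0.368 : ℝ) ≤ q * Real.log q := by
  have h := elog_le_div_e2 (y := q⁻¹) (by positivity)
  rw [Real.log_inv] at h
  have h2 := mul_le_mul_of_nonneg_left h hq.le
  have h3 : q * (q⁻¹ / Real.exp 1) = (Real.exp 1)⁻¹ := by field_simp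
  rw [h3] at h2
  have he : (2.7182818:ℝ) < Real.exp 1 := by
    have := Real.exp_one_gt_d9; norm_num at this ⊢; linarith
  have h4 : (Real.exp 1)⁻¹ ≤ (0.368 : ℝ) := by
    rw [inv_le_comm₀ (Real.exp_pos 1) (by norm_num)]
    norm_num
    linarith
  nlinarith

private lemma L8 {q : ℝ} (hq : 7/40 ≤ q) :
    (1:ℝ)/16 ≤ q * (2 * Real.log 16 + Real.log q - 1) := by
  have hq0 : 0 < q := by linarith
  have h1 := mul_log_ge_neg_inv_e2 hq0
  have h2 : (8:ℝ) * 0.6931471803 ≤ 2 * Real.log 16 := by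
    rw [show (16:ℝ) = 2^(4:ℕ) by norm_num, Real.log_pow]
    have := Real.log_two_gt_d9
    push_cast; nlinarith
  nlinarith [mul_le_mul_of_nonneg_right h2 hq0.le]




private lemma Phi_nonneg {u m : ℝ} (hu : 0 < u) (hm : 0 < m) :
    0 ≤ u * Real.log (u / m) - u + m := by
  have h := Real.log_le_sub_one_of_pos (x := m / u) (by positivity)
  have hlog : Real.log (m / u) = - Real.log (u / m) := by
    rw [← Real.log_inv]; congr 1; field_simp
  rw [hlog] at h
  have h2 := mul_le_mul_of_nonneg_left h (le_of_lt hu)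
  have hmu : u * (m / u - 1) = m - u := by field_simp
  nlinarith

private lemma keyLemma {r q : ℝ} {d : ℕ} (hr : 16 ≤ r) (hd : 1 ≤ d)
    (hq1 : 7/40 < q) (hq2 : q < Real.exp 1) :
    (r/4)^d * ((if q ≤ 1 then q * (1 - Real.log q) else 1) - (q * Real.log q - q + 1))
      ≤ (r^d * q) * Real.log (r^d * q) - r^d * q := by
  have hq0 : 0 < q := by linarith
  have hr0 : (0:ℝ) < r := by linarith
  have hρ0 : (0:ℝ) < r^d := pow_pos hr0 d
  set net : ℝ := (if q ≤ 1 then q * (1 - Real.log q) else 1) - (q * Real.log q - q + 1) with hnet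
  have hlogρq : Real.log (r^d * q) = d * Real.log r + Real.log q := by
    rw [Real.log_mul (ne_of_gt hρ0) (ne_of_gt hq0), Real.log_pow]
  have hlogr : Real.log 16 ≤ Real.log r := Real.log_le_log (by norm_num) hr
  -- main reduction
  have main : net / 4^d ≤ q * (d * Real.log 16 + Real.log q - 1) := by
    rcases eq_or_lt_of_le hd with hd1 | hd2
    · -- d = 1
      have hd1' : d = 1 := hd1.symm
      subst hd1'
      have hcase : net ≤ 4 * q * (Real.log 16 + Real.log q - 1) := by
        by_cases h1 : q ≤ 1
        · rw [hnet, if_pos h1]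
          have := L5 hq0
          nlinarith [this]
        · rw [hnet, if_neg h1]; exact L6 (le_of_not_ge h1)
      push_cast
      nlinarith [hcase]
    · -- d ≥ 2
      have hd2' : 2 ≤ d := hd2
      have hnet1 : net ≤ 1 := by
        by_cases h1 : q ≤ 1
        · rw [hnet, if_pos h1]
          have := L7 hq0 h1
          have := Phi1_nonneg hq0
          linarith
        · rw [hnet, if_neg h1]
          have := Phi1_nonneg hq0
          linarith
      have h4d : (16:ℝ) ≤ 4^d := by
        calc (16:ℝ) = 4^(2:ℕ) := by norm_num
        _ ≤ 4^d := pow_le_pow_right₀ (by norm_num) hd2'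
      have h4d0 : (0:ℝ) < 4^d := by positivity
      have step1 : net / 4^d ≤ 1/16 := by
        rcases le_or_gt net 0 with h | h
        · have : net / 4^d ≤ 0 := div_nonpos_of_nonpos_of_nonneg h h4d0.le
          linarith
        · calc net / 4^d ≤ 1 / 4^d := by
                apply div_le_div₀ (by norm_num) hnet1 h4d0 le_rfl
          _ ≤ 1/16 := by
                rw [div_le_div_iff₀ h4d0 (by norm_num)]
                linarith
      have step2 : q * (2 * Real.log 16 + Real.log q - 1) ≤ q * (d * Real.log 16 + Real.log q - 1) := by
        apply mul_le_mul_of_nonneg_left _ hq0.le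
        have h16 : (0:ℝ) ≤ Real.log 16 := by linarith [log16_ge]
        have : (2:ℝ) ≤ (d:ℝ) := by exact_mod_cast hd2'
        nlinarith
      linarith [L8 hq1.le, step1, step2]
  -- conclude
  have hrhs : (r^d * q) * Real.log (r^d * q) - r^d * q = r^d * (q * (d * Real.log r + Real.log q - 1)) := by
    rw [hlogρq]; ring
  have hlhs : (r/4)^d * net = r^d * (net / 4^d) := by
    rw [div_pow]; ring
  rw [hrhs, hlhs]
  apply mul_le_mul_of_nonneg_left _ hρ0.le
  calc net / 4^d ≤ q * (d * Real.log 16 + Real.log q - 1) := main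
  _ ≤ q * (d * Real.log r + Real.log q - 1) := by
      apply mul_le_mul_of_nonneg_left _ hq0.le
      have hd0 : (0:ℝ) ≤ (d:ℝ) := by positivity
      nlinarith [hlogr]



-- φ monotone above m
private lemma phi_mono {m u v : ℝ} (hm : 0 < m) (hu : m ≤ u) (huv : u ≤ v) :
    u * Real.log (u/m) - u + m ≤ v * Real.log (v/m) - v + m := by
  have hu0 : 0 < u := lt_of_lt_of_le hm hu
  have hv0 : 0 < v := lt_of_lt_of_le hu0 huv
  have h1 : Real.log (u/v) ≤ u/v - 1 := Real.log_le_sub_one_of_pos (by positivity)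
  have hlog : Real.log (u/v) = Real.log (u/m) - Real.log (v/m) := by
    rw [Real.log_div (ne_of_gt hu0) (ne_of_gt hv0), Real.log_div (ne_of_gt hu0) (ne_of_gt hm),
      Real.log_div (ne_of_gt hv0) (ne_of_gt hm)]
    ring
  rw [hlog] at h1
  have h2 := mul_le_mul_of_nonneg_left h1 hv0.le
  have h3 : v * (u/v - 1) = u - v := by field_simp
  have h4 : 0 ≤ Real.log (u/m) := Real.log_nonneg (by rw [le_div_iff₀ hm]; linarith)
  -- v log(v/m) ≥ v log(u/m) + v - u
  nlinarith [h2, mul_le_mul_of_nonneg_left h4 (by linarith : (0:ℝ) ≤ v - u)]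

-- φ(u) ≤ m for 0 < u ≤ m
private lemma phi_le_m {m u : ℝ} (hm : 0 < m) (hu : 0 < u) (hum : u ≤ m) :
    u * Real.log (u/m) - u + m ≤ m := by
  have h : Real.log (u/m) ≤ 0 := Real.log_nonpos (by positivity) (by rw [div_le_one hm]; linarith)
  nlinarith

-- cost bound
private lemma cost_bound {m u v : ℝ} (hm : 0 < m) (hu : 0 < u) (huv : u ≤ v) :
    u * Real.log (u/m) - u + m ≤ (v * Real.log (v/m) - v + m)
      + (if v ≤ m then v - v * Real.log (v/m) else m) := by
  have hv0 : 0 < v := lt_of_lt_of_le hu huv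
  by_cases hvm : v ≤ m
  · rw [if_pos hvm]
    have h : Real.log (u/m) ≤ 0 := Real.log_nonpos (by positivity)
      (by rw [div_le_one hm]; linarith)
    nlinarith
  · rw [if_neg hvm]
    push_neg at hvm
    by_cases hum : m ≤ u
    · have := phi_mono hm hum huv
      have := Phi_nonneg hv0 hm
      linarith
    · push_neg at hum
      have h1 := phi_le_m hm hu hum.le
      have h2 := Phi_nonneg hv0 hm
      linarith


private lemma cost_le_phi_small {m v : ℝ} (hm : 0 < m) (hv : 0 < v) (h : v ≤ 7/40 * m) :
    v - v * Real.log (v/m) ≤ v * Real.log (v/m) - v + m := by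
  have hq0 : 0 < v/m := by positivity
  have hq : v/m ≤ 7/40 := by rw [div_le_iff₀ hm]; linarith
  have := L1 hq0 hq
  have hvm : v = (v/m) * m := by field_simp
  nlinarith [this, hm]

-- m ≤ φ(v) for v ≥ e m
private lemma m_le_phi_big {m v : ℝ} (hm : 0 < m) (h : Real.exp 1 * m ≤ v) :
    m ≤ v * Real.log (v/m) - v + m := by
  have hv0 : 0 < v := lt_of_lt_of_le (by positivity) h
  have h1 : Real.exp 1 ≤ v/m := by rw [le_div_iff₀ hm]; linarith
  have h2 : 1 ≤ Real.log (v/m) := (Real.le_log_iff_exp_le (by positivity)).mpr h1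
  nlinarith


private lemma cost_le_m {m v : ℝ} (hm : 0 < m) (hv : 0 < v) :
    (if v ≤ m then v - v * Real.log (v/m) else m) ≤ m := by
  by_cases hvm : v ≤ m
  · rw [if_pos hvm]
    have hq0 : 0 < v/m := by positivity
    have hq1 : v/m ≤ 1 := by rw [div_le_one hm]; linarith
    have := L7 hq0 hq1
    have hvm' : v = (v/m) * m := by field_simp
    nlinarith
  · rw [if_neg hvm]

-- scaled key lemma
private lemma key_scaled {m v r : ℝ} {d : ℕ} (hm : 0 < m) (hv : 0 < v) (hr : 16 ≤ r) (hd : 1 ≤ d)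
    (h1 : 7/40 * m < v) (h2 : v < Real.exp 1 * m) :
    (r/4)^d * ((if v ≤ m then v - v * Real.log (v/m) else m) - (v * Real.log (v/m) - v + m))
      ≤ (r^d * v) * Real.log (r^d * v / m) - r^d * v := by
  set q := v/m with hqdef
  have hq0 : 0 < q := by positivity
  have hq1 : 7/40 < q := by rw [hqdef, lt_div_iff₀ hm]; linarith
  have hq2 : q < Real.exp 1 := by rw [hqdef, div_lt_iff₀ hm]; linarith
  have hkey := keyLemma hr hd hq1 hq2
  have hvq : v = q * m := by rw [hqdef]; field_simp
  have hiff : v ≤ m ↔ q ≤ 1 := by rw [hqdef, div_le_one hm]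
  have hlogq : Real.log (v/m) = Real.log q := by rw [hqdef]
  have hlog2 : Real.log (r^d * v / m) = Real.log (r^d * q) := by
    rw [show r^d * v / m = r^d * (v/m) by ring, hqdef]
  have hmul := mul_le_mul_of_nonneg_left hkey hm.le
  rw [hlogq, hlog2]
  by_cases hc : q ≤ 1
  · rw [if_pos (hiff.mpr hc), hvq]
    rw [if_pos hc] at hmul
    nlinarith [hmul]
  · rw [if_neg (fun h => hc (hiff.mp h)), hvq]
    rw [if_neg hc] at hmul
    nlinarith [hmul]



section Graph
variable (π : X → ℝ) (Q : X → X → ℝ)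
variable (hQ : ∀ x y : X, x ≠ y → 0 ≤ Q x y) (hπpos : ∀ x : X, 0 < π x)
  (hrev : ∀ x y : X, π x * Q x y = π y * Q y x) (hirr : MarkovIrreducible Q)

include hQ in
lemma jumpRate_ge {x y : X} (hxy : x ≠ y) : Q x y ≤ jumpRate Q x := by
  apply Finset.single_le_sum (f := fun w => Q x w)
  · intro i hi
    exact hQ x i (Finset.ne_of_mem_erase hi).symm
  · exact Finset.mem_erase.mpr ⟨hxy.symm, Finset.mem_univ y⟩

include hπpos hrev hQ in
lemma edge_sym {x y : X} (hxy : x ≠ y) (h : 0 < Q x y) : 0 < Q y x := by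
  have h1 := hrev x y
  have h2 : 0 < π y * Q y x := by
    rw [← h1]; exact mul_pos (hπpos x) h
  nlinarith [hπpos y, hQ y x hxy.symm]

include hirr in
lemma sparsity_nonempty (hne : ∃ x y : X, x ≠ y) :
    {s : ℝ | ∃ x y : X, x ≠ y ∧ 0 < Q x y ∧
      s = Q x y / max (jumpRate Q x) (Q y x)}.Nonempty := by
  obtain ⟨a, b, hab⟩ := hne
  have h := hirr a b
  rcases h.cases_head with h | ⟨c, ⟨hac, hQac⟩, -⟩
  · exact absurd h hab
  · exact ⟨_, a, c, hac, hQac, rfl⟩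

lemma sparsity_finite :
    {s : ℝ | ∃ x y : X, x ≠ y ∧ 0 < Q x y ∧
      s = Q x y / max (jumpRate Q x) (Q y x)}.Finite := by
  apply Set.Finite.subset (Set.finite_range
    (fun xy : X × X => Q xy.1 xy.2 / max (jumpRate Q xy.1) (Q xy.2 xy.1)))
  rintro s ⟨x, y, -, -, rfl⟩
  exact ⟨(x, y), rfl⟩


include hQ hπpos hrev hirr in
lemma sparsity_pos (hne : ∃ x y : X, x ≠ y) : 0 < sparsity Q := by
  have hmem := (sparsity_nonempty Q hirr hne).csInf_mem (sparsity_finite Q)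
  obtain ⟨x, y, hxy, hQxy, heq⟩ := hmem
  rw [sparsity, heq]
  apply div_pos hQxy
  exact lt_max_of_lt_left (lt_of_lt_of_le hQxy (jumpRate_ge Q hQ hxy))

include hirr in
lemma sparsity_le {x y : X} (hxy : x ≠ y) (hQxy : 0 < Q x y) :
    sparsity Q ≤ Q x y / max (jumpRate Q x) (Q y x) := by
  apply csInf_le ((sparsity_finite Q).bddBelow)
  exact ⟨x, y, hxy, hQxy, rfl⟩

include hQ hirr in
lemma sparsity_mul_le {x y : X} (hxy : x ≠ y) (hQxy : 0 < Q x y) :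
    sparsity Q * max (jumpRate Q x) (Q y x) ≤ Q x y := by
  have h := sparsity_le Q hirr hxy hQxy
  have hden : 0 < max (jumpRate Q x) (Q y x) :=
    lt_max_of_lt_left (lt_of_lt_of_le hQxy (jumpRate_ge Q hQ hxy))
  rw [le_div_iff₀ hden] at h
  linarith

-- π ratio across an edge of the chain graph
include hQ hπpos hrev hirr in
lemma pi_ratio {x y : X} (h : (chainGraph Q).Adj x y) : sparsity Q * π x ≤ π y := by
  obtain ⟨hxy, hor⟩ := h
  have hQxy : 0 < Q x y := by
    rcases hor with h | h
    · exact h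
    · exact edge_sym π Q hQ hπpos hrev hxy.symm h
  have hQyx : 0 < Q y x := edge_sym π Q hQ hπpos hrev hxy hQxy
  -- sparsity for edge (x,y) : p * Q y x ≤ p * max (jumpRate x) (Q y x) ≤ Q x y
  have h1 : sparsity Q * Q y x ≤ Q x y := by
    have := sparsity_mul_le Q hQ hirr hxy hQxy
    have hp0 : 0 ≤ sparsity Q := by
      rcases (em (∃ a b : X, a ≠ b)) with he | he
      · exact (sparsity_pos π Q hQ hπpos hrev hirr he).le
      · exact absurd ⟨x, y, hxy⟩ he
    nlinarith [le_max_right (jumpRate Q x) (Q y x)]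
  -- π y * Q y x = π x * Q x y ≥ π x * p * Q y x  ⇒ π y ≥ p π x
  have h2 : π x * (sparsity Q * Q y x) ≤ π x * Q x y :=
    mul_le_mul_of_nonneg_left h1 (hπpos x).le
  rw [hrev x y] at h2
  nlinarith [hπpos x, hπpos y]

-- degree bound : p * deg(y) ≤ 1
include hQ hπpos hrev hirr in
lemma degree_bound (y : X) :
    sparsity Q * (univ.filter (fun w => (chainGraph Q).Adj y w)).card ≤ 1 := by
  by_cases hdeg : (univ.filter (fun w => (chainGraph Q).Adj y w)).card = 0
  · rw [hdeg]
    norm_num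
  · -- there exists a neighbor, so jumpRate y > 0
    obtain ⟨w0, hw0'⟩ := Finset.card_pos.mp (Nat.pos_of_ne_zero hdeg)
    have hw0 : (chainGraph Q).Adj y w0 := (Finset.mem_filter.mp hw0').2
    have hne : ∃ a b : X, a ≠ b := ⟨y, w0, hw0.1⟩
    have hp0 := sparsity_pos π Q hQ hπpos hrev hirr hne
    have hQy : ∀ w : X, (chainGraph Q).Adj y w → sparsity Q * jumpRate Q y ≤ Q y w := by
      intro w hw
      have hQyw : 0 < Q y w := by
        rcases hw.2 with h | h
        · exact h
        · exact edge_sym π Q hQ hπpos hrev hw.1.symm h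
      have := sparsity_mul_le Q hQ hirr hw.1 hQyw
      nlinarith [le_max_left (jumpRate Q y) (Q w y), hp0]
    have hsum : (((univ.filter (fun w => (chainGraph Q).Adj y w))).card : ℝ) * (sparsity Q * jumpRate Q y)
        ≤ jumpRate Q y := by
      calc (((univ.filter (fun w => (chainGraph Q).Adj y w))).card : ℝ) * (sparsity Q * jumpRate Q y)
          = ∑ _w ∈ univ.filter (fun w => (chainGraph Q).Adj y w), sparsity Q * jumpRate Q y := by
            rw [Finset.sum_const, nsmul_eq_mul]
        _ ≤ ∑ w ∈ univ.filter (fun w => (chainGraph Q).Adj y w), Q y w := by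
            apply Finset.sum_le_sum
            intro w hw
            exact hQy w (Finset.mem_filter.mp hw).2
        _ ≤ ∑ w ∈ univ.erase y, Q y w := by
            apply Finset.sum_le_sum_of_subset_of_nonneg
            · intro w hw
              exact Finset.mem_erase.mpr ⟨((Finset.mem_filter.mp hw).2).1.symm, Finset.mem_univ w⟩
            · intro w hw _
              exact hQ y w (Finset.ne_of_mem_erase hw).symm
        _ = jumpRate Q y := rfl
    have hjr : 0 < jumpRate Q y := by
      have hQyw0 : 0 < Q y w0 := by
        rcases hw0.2 with h | h
        · exact h
        · exact edge_sym π Q hQ hπpos hrev hw0.1.symm h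
      exact lt_of_lt_of_le hQyw0 (jumpRate_ge Q hQ hw0.1)
    nlinarith [hsum, hjr, hp0]


include hirr in
lemma chain_reachable (x y : X) : (chainGraph Q).Reachable x y := by
  rw [SimpleGraph.reachable_iff_reflTransGen]
  refine Relation.ReflTransGen.mono ?_ _ _ (hirr x y)
  intro a b hab
  exact ⟨hab.1, Or.inl hab.2⟩

include hQ hπpos hrev hirr in
lemma walk_pi (hp0 : 0 < sparsity Q) {x z : X} (w : (chainGraph Q).Walk x z) :
    π x ≤ π z * (1 / sparsity Q) ^ w.length := by
  induction w with
  | nil => simp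
  | cons h q ih =>
    rename_i a b c
    have h1 : sparsity Q * π a ≤ π b := pi_ratio π Q hQ hπpos hrev hirr h
    have h2 : π a ≤ π b * (1 / sparsity Q) := by
      rw [mul_one_div, le_div_iff₀ hp0]
      linarith
    calc π a ≤ π b * (1 / sparsity Q) := h2
      _ ≤ (π c * (1 / sparsity Q) ^ q.length) * (1 / sparsity Q) := by
          apply mul_le_mul_of_nonneg_right ih (by positivity)
      _ = π c * (1 / sparsity Q) ^ (q.length + 1) := by ring
      _ = π c * (1 / sparsity Q) ^ (SimpleGraph.Walk.cons h q).length := by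
          rw [SimpleGraph.Walk.length_cons]

include hirr in
lemma dist_head {x z : X} {d : ℕ} (hd : graphDist Q x z = d + 1) :
    ∃ y : X, (chainGraph Q).Adj x y ∧ graphDist Q y z = d := by
  obtain ⟨w, hw⟩ := (chain_reachable Q hirr x z).exists_walk_length_eq_dist
  rw [← graphDist] at hw
  rw [hd] at hw
  cases w with
  | nil => simp at hw
  | cons h q =>
    rename_i b
    refine ⟨b, h, ?_⟩
    have h1 : graphDist Q b z ≤ d := by
      have h3 := SimpleGraph.dist_le q
      rw [SimpleGraph.Walk.length_cons] at hw
      rw [graphDist]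
      omega
    have h2 : d ≤ graphDist Q b z := by
      obtain ⟨w2, hw2⟩ := (chain_reachable Q hirr b z).exists_walk_length_eq_dist
      have := SimpleGraph.dist_le (SimpleGraph.Walk.cons h w2)
      rw [SimpleGraph.Walk.length_cons, hw2] at this
      rw [graphDist] at hd ⊢
      omega
    omega


include hQ hπpos hrev hirr in
lemma shell_bound (hp0 : 0 < sparsity Q) (z : X) (d : ℕ) :
    ∑ x ∈ univ.filter (fun x => graphDist Q x z = d), π x
      ≤ π z * ((1 / sparsity Q)^2)^d := by
  induction d with
  | zero =>
    simp only [pow_zero, mul_one]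
    have hsub : univ.filter (fun x => graphDist Q x z = 0) ⊆ {z} := by
      intro x hx
      have hx' := (Finset.mem_filter.mp hx).2
      have hreach := chain_reachable Q hirr x z
      have := (hreach.dist_eq_zero_iff).mp hx'
      simp [this]
    calc ∑ x ∈ univ.filter (fun x => graphDist Q x z = 0), π x
        ≤ ∑ x ∈ ({z} : Finset X), π x := by
          apply Finset.sum_le_sum_of_subset_of_nonneg hsub
          intro i _ _; exact (hπpos i).le
      _ = π z := by simp
  | succ d ih =>
    set p := sparsity Q with hpdef
    -- predecessor function
    have hpred : ∀ x : X, graphDist Q x z = d + 1 →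
        ∃ y : X, (chainGraph Q).Adj x y ∧ graphDist Q y z = d := fun x hx =>
      dist_head Q hirr hx
    classical
    set pred : X → X := fun x =>
      if h : graphDist Q x z = d + 1 then Classical.choose (hpred x h) else z with hpreddef
    have hpred_spec : ∀ x : X, (h : graphDist Q x z = d + 1) →
        (chainGraph Q).Adj x (pred x) ∧ graphDist Q (pred x) z = d := by
      intro x h
      rw [hpreddef]
      simp only [dif_pos h]
      exact Classical.choose_spec (hpred x h)
    have hmaps : ∀ x ∈ univ.filter (fun x => graphDist Q x z = d + 1),
        pred x ∈ univ.filter (fun x => graphDist Q x z = d) := by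
      intro x hx
      have h := (Finset.mem_filter.mp hx).2
      exact Finset.mem_filter.mpr ⟨Finset.mem_univ _, (hpred_spec x h).2⟩
    have step1 : ∑ x ∈ univ.filter (fun x => graphDist Q x z = d + 1), π x
        ≤ ∑ x ∈ univ.filter (fun x => graphDist Q x z = d + 1), π (pred x) * (1/p) := by
      apply Finset.sum_le_sum
      intro x hx
      have h := (Finset.mem_filter.mp hx).2
      have hadj := (hpred_spec x h).1
      have := pi_ratio π Q hQ hπpos hrev hirr hadj
      rw [mul_one_div, le_div_iff₀ hp0]
      linarith
    have step2 : ∑ x ∈ univ.filter (fun x => graphDist Q x z = d + 1), π (pred x) * (1/p)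
        = ∑ y ∈ univ.filter (fun x => graphDist Q x z = d),
            ∑ x ∈ (univ.filter (fun x => graphDist Q x z = d + 1)).filter (fun x => pred x = y),
              π (pred x) * (1/p) := by
      rw [Finset.sum_fiberwise_of_maps_to hmaps]
    have step3 : ∀ y ∈ univ.filter (fun x => graphDist Q x z = d),
        ∑ x ∈ (univ.filter (fun x => graphDist Q x z = d + 1)).filter (fun x => pred x = y),
          π (pred x) * (1/p) ≤ (1/p)^2 * π y := by
      intro y _
      have hcard : (((univ.filter (fun x => graphDist Q x z = d + 1)).filter
          (fun x => pred x = y)).card : ℝ) ≤ 1/p := by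
        have hsub : ((univ.filter (fun x => graphDist Q x z = d + 1)).filter (fun x => pred x = y))
            ⊆ univ.filter (fun w => (chainGraph Q).Adj y w) := by
          intro x hx
          obtain ⟨hx1, hx2⟩ := Finset.mem_filter.mp hx
          have h := (Finset.mem_filter.mp hx1).2
          have hadj := (hpred_spec x h).1
          rw [hx2] at hadj
          exact Finset.mem_filter.mpr ⟨Finset.mem_univ _, hadj.symm⟩
        have h1 : (((univ.filter (fun x => graphDist Q x z = d + 1)).filter
            (fun x => pred x = y)).card : ℝ)
            ≤ ((univ.filter (fun w => (chainGraph Q).Adj y w)).card : ℝ) := by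
          exact_mod_cast Finset.card_le_card hsub
        have h2 := degree_bound π Q hQ hπpos hrev hirr y
        rw [le_div_iff₀ hp0]
        nlinarith
      calc ∑ x ∈ (univ.filter (fun x => graphDist Q x z = d + 1)).filter (fun x => pred x = y),
            π (pred x) * (1/p)
          = ∑ x ∈ (univ.filter (fun x => graphDist Q x z = d + 1)).filter (fun x => pred x = y),
            π y * (1/p) := by
            apply Finset.sum_congr rfl
            intro x hx
            rw [(Finset.mem_filter.mp hx).2]
        _ = (((univ.filter (fun x => graphDist Q x z = d + 1)).filter
            (fun x => pred x = y)).card : ℝ) * (π y * (1/p)) := by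
            rw [Finset.sum_const, nsmul_eq_mul]
        _ ≤ (1/p) * (π y * (1/p)) := by
            apply mul_le_mul_of_nonneg_right hcard
            have := (hπpos y).le
            positivity
        _ = (1/p)^2 * π y := by ring
    calc ∑ x ∈ univ.filter (fun x => graphDist Q x z = d + 1), π x
        ≤ ∑ y ∈ univ.filter (fun x => graphDist Q x z = d), (1/p)^2 * π y := by
          rw [step2] at step1
          exact le_trans step1 (Finset.sum_le_sum step3)
      _ = (1/p)^2 * ∑ y ∈ univ.filter (fun x => graphDist Q x z = d), π y := by
          rw [Finset.mul_sum]
      _ ≤ (1/p)^2 * (π z * ((1/p)^2)^d) := by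
          apply mul_le_mul_of_nonneg_left ih (by positivity)
      _ = π z * ((1/p)^2)^(d+1) := by ring

end Graph

end STCAux

theorem comparison_of_entropies
    (π : X → ℝ) (Q : X → X → ℝ)
    (hQ : ∀ x y : X, x ≠ y → 0 ≤ Q x y)
    (hQsum : ∀ x : X, ∑ y : X, Q x y = 0)
    (hirr : MarkovIrreducible Q)
    (hπpos : ∀ x : X, 0 < π x)
    (hπsum : ∑ x : X, π x = 1)
    (hrev : ∀ x y : X, π x * Q x y = π y * Q y x)
    (hp : sparsity Q ≤ 1 / 2) (f : X → ℝ) (hf : ∀ x, 0 < f x) :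
     entropy π f ≤ 2 * entropy π (fStar Q (4 / sparsity Q ^ 2) f) := by
  classical
  by_cases hsing : ∀ x y : X, x = y
  · -- degenerate case : all states equal
    have hmean : ∀ h : X → ℝ, mean π h = h (Classical.arbitrary X) := by
      intro h
      have huniv : (univ : Finset X) = {Classical.arbitrary X} := by
        apply Finset.eq_singleton_iff_unique_mem.mpr
        exact ⟨mem_univ _, fun y _ => hsing y _⟩
      have hπa : π (Classical.arbitrary X) = 1 := by
        have h1 := hπsum
        rw [huniv, Finset.sum_singleton] at h1
        exact h1
      rw [mean, huniv, Finset.sum_singleton, hπa, one_mul]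
    have hent : ∀ h : X → ℝ, entropy π h = 0 := by
      intro h
      rw [entropy, hmean, hmean]
      ring
    rw [hent, hent]
    norm_num
  · push_neg at hsing
    obtain ⟨a0, b0, hab0⟩ := hsing
    have hne : ∃ x y : X, x ≠ y := ⟨a0, b0, hab0⟩
    set p := sparsity Q with hpdef
    have hp0 : 0 < p := sparsity_pos π Q hQ hπpos hrev hirr hne
    set r : ℝ := 4 / p ^ 2 with hrdef
    have hr0 : 0 < r := by positivity
    have hr16 : (16:ℝ) ≤ r := by
      rw [hrdef, le_div_iff₀ (by positivity)]
      nlinarith [hp]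
    set g : X → ℝ := fStar Q r f with hgdef
    have hgmax : ∀ x, ∃ z, g x = r ^ (-(graphDist Q x z : ℤ)) * f z := by
      intro x
      obtain ⟨z, _, hz⟩ := Finset.exists_mem_eq_sup' (univ_nonempty)
        (fun z => r ^ (-(graphDist Q x z : ℤ)) * f z)
      exact ⟨z, hz⟩
    have hgf : ∀ x, f x ≤ g x := by
      intro x
      have h1 : r ^ (-(graphDist Q x x : ℤ)) * f x ≤ g x :=
        Finset.le_sup' (fun z => r ^ (-(graphDist Q x z : ℤ)) * f z) (mem_univ x)
      rwa [graphDist, SimpleGraph.dist_self, Nat.cast_zero, neg_zero, zpow_zero, one_mul] at h1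
    have hg0 : ∀ x, 0 < g x := fun x => lt_of_lt_of_le (hf x) (hgf x)
    set m := mean π g with hmdef
    have hm0 : 0 < m := by
      rw [hmdef, mean]
      exact Finset.sum_pos (fun x _ => mul_pos (hπpos x) (hg0 x)) univ_nonempty
    set φ : ℝ → ℝ := fun u => u * Real.log (u / m) - u + m with hφdef
    have expand : ∀ h : X → ℝ, (∀ x, 0 < h x) →
        ∑ x, π x * φ (h x) = (∑ x, π x * (h x * Real.log (h x)))
          - Real.log m * mean π h - mean π h + m := by
      intro h hh
      have hpt : ∀ x : X, π x * φ (h x) = π x * (h x * Real.log (h x))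
          - Real.log m * (π x * h x) - π x * h x + π x * m := by
        intro x
        rw [hφdef]
        simp only []
        rw [Real.log_div (ne_of_gt (hh x)) (ne_of_gt hm0)]
        ring
      calc ∑ x, π x * φ (h x)
          = ∑ x, (π x * (h x * Real.log (h x)) - Real.log m * (π x * h x)
              - π x * h x + π x * m) := Finset.sum_congr rfl (fun x _ => hpt x)
        _ = (∑ x, π x * (h x * Real.log (h x))) - Real.log m * (∑ x, π x * h x)
              - (∑ x, π x * h x) + (∑ x, π x) * m := by
            rw [Finset.sum_add_distrib, Finset.sum_sub_distrib, Finset.sum_sub_distrib,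
              ← Finset.mul_sum, ← Finset.sum_mul]
        _ = _ := by rw [hπsum, mean]; ring
    have ht0 : 0 < mean π f := by
      rw [mean]
      exact Finset.sum_pos (fun x _ => mul_pos (hπpos x) (hf x)) univ_nonempty
    have E1 : entropy π f ≤ ∑ x, π x * φ (f x) := by
      rw [expand f hf, entropy]
      have hlog := Real.log_le_sub_one_of_pos (x := m / mean π f) (by positivity)
      rw [Real.log_div (ne_of_gt hm0) (ne_of_gt ht0)] at hlog
      have hmm : mean π (fun x => f x * Real.log (f x)) = ∑ x, π x * (f x * Real.log (f x)) := rfl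
      rw [hmm]
      have h2 := mul_le_mul_of_nonneg_left hlog ht0.le
      have h3 : mean π f * (m / mean π f - 1) = m - mean π f := by field_simp
      nlinarith
    have E3 : ∑ x, π x * φ (g x) = entropy π g := by
      rw [expand g hg0, entropy]
      have hmm : mean π (fun x => g x * Real.log (g x)) = ∑ x, π x * (g x * Real.log (g x)) := rfl
      rw [hmm, ← hmdef]
      ring

    have ledger : ∑ x, π x * φ (f x) ≤ 2 * ∑ x, π x * φ (g x) := by
      set S : Finset X := univ.filter (fun x => f x < g x) with hSdef
      set zf : X → X := fun x => Classical.choose (hgmax x) with hzfdef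
      have hzf : ∀ x, g x = r ^ (-(graphDist Q x (zf x) : ℤ)) * f (zf x) := fun x =>
        Classical.choose_spec (hgmax x)
      have hSz : ∀ x, f x < g x →
          1 ≤ graphDist Q x (zf x) ∧ f (zf x) = r ^ (graphDist Q x (zf x)) * g x := by
        intro x hx
        have hzx : zf x ≠ x := by
          intro he
          have h1 := hzf x
          rw [he, graphDist, SimpleGraph.dist_self] at h1
          rw [Nat.cast_zero, neg_zero, zpow_zero, one_mul] at h1
          rw [h1] at hx
          exact lt_irrefl _ hx
        have hreach := chain_reachable Q hirr x (zf x)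
        have hd1 : 0 < graphDist Q x (zf x) := by
          rw [graphDist]
          exact hreach.pos_dist_of_ne (fun he => hzx he.symm)
        refine ⟨hd1, ?_⟩
        have h1 := hzf x
        have h2 : (r:ℝ) ^ (-(graphDist Q x (zf x) : ℤ))
            = (r ^ (graphDist Q x (zf x) : ℕ))⁻¹ := by
          rw [zpow_neg, zpow_natCast]
        rw [h2] at h1
        have hrd : (0:ℝ) < r ^ (graphDist Q x (zf x) : ℕ) := pow_pos hr0 _
        rw [h1]
        field_simp
      set Cost : X → ℝ := fun x =>
        if g x ≤ m then g x - g x * Real.log (g x / m) else m with hCostdef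
      set A : X → ℝ := fun x =>
        if Real.exp 1 * m ≤ g x then m else φ (g x) with hAdef
      set W : Finset X := S.filter (fun x => 7/40 * m < g x ∧ g x < Real.exp 1 * m) with hWdef
      set Zs : Finset X := W.image zf with hZdef
      have he28 : Real.exp 1 < 2.8 := lt_trans Real.exp_one_lt_d9 (by norm_num)
      have he1 : (1:ℝ) ≤ Real.exp 1 := by
        have := Real.add_one_le_exp 1; linarith
      have hWmem : ∀ x, x ∈ W → f x < g x ∧ 7/40 * m < g x ∧ g x < Real.exp 1 * m := by
        intro x hx
        obtain ⟨hxS, hmid⟩ := Finset.mem_filter.mp hx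
        exact ⟨(Finset.mem_filter.mp hxS).2, hmid⟩
      have hrecip : ∀ x, x ∈ W → Real.exp 1 * m ≤ f (zf x) := by
        intro x hxW
        obtain ⟨hxS, hmid1, hmid2⟩ := hWmem x hxW
        obtain ⟨hd1, hfz⟩ := hSz x hxS
        have hpow : r ≤ r ^ (graphDist Q x (zf x)) :=
          le_self_pow₀ (by linarith) (by omega)
        have h16 : (16:ℝ) ≤ r ^ (graphDist Q x (zf x)) := le_trans hr16 hpow
        have hmul : 16 * (7/40 * m) ≤ r ^ (graphDist Q x (zf x)) * g x :=
          mul_le_mul h16 hmid1.le (by positivity) (by positivity)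
        rw [← hfz] at hmul
        nlinarith [hm0, he28]
      -- pointwise cost comparison
      have ptwise : ∀ x : X, π x * φ (f x) ≤ π x * φ (g x)
          + (if x ∈ S then π x * Cost x else 0) := by
        intro x
        by_cases hx : x ∈ S
        · rw [if_pos hx]
          have hcb := cost_bound (m := m) hm0 (hf x) (hgf x)
          have hφf : φ (f x) = f x * Real.log (f x / m) - f x + m := rfl
          have hφg : φ (g x) = g x * Real.log (g x / m) - g x + m := rfl
          have hCx : Cost x = if g x ≤ m then g x - g x * Real.log (g x / m) else m := rfl
          rw [hφf, hφg, hCx]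
          have := mul_le_mul_of_nonneg_left hcb (hπpos x).le
          linarith [this]
        · rw [if_neg hx, add_zero]
          have heq : f x = g x := by
            have : ¬ f x < g x := by
              intro hc
              exact hx (Finset.mem_filter.mpr ⟨mem_univ x, hc⟩)
            linarith [hgf x, not_lt.mp this]
          rw [heq]
      have sum1 : ∑ x, π x * φ (f x) ≤ (∑ x, π x * φ (g x)) + ∑ x ∈ S, π x * Cost x := by
        calc ∑ x, π x * φ (f x)
            ≤ ∑ x, (π x * φ (g x) + if x ∈ S then π x * Cost x else 0) :=
              Finset.sum_le_sum (fun x _ => ptwise x)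
          _ = (∑ x, π x * φ (g x)) + ∑ x, (if x ∈ S then π x * Cost x else 0) :=
              Finset.sum_add_distrib
          _ = _ := by rw [Finset.sum_ite_mem, Finset.univ_inter]
      -- B1
      have hWS : W ⊆ S := Finset.filter_subset _ _
      have B1 : ∑ x ∈ S, π x * Cost x
          ≤ (∑ x ∈ S, π x * A x) + ∑ x ∈ W, π x * (Cost x - φ (g x)) := by
        have hpt : ∀ x ∈ S, π x * Cost x ≤ π x * A x
            + (if x ∈ W then π x * (Cost x - φ (g x)) else 0) := by
          intro x hxS
          by_cases hbig : Real.exp 1 * m ≤ g x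
          · have hWx : x ∉ W := by
              intro hc
              exact absurd (hWmem x hc).2.2 (not_lt.mpr hbig)
            rw [if_neg hWx, add_zero]
            have hA : A x = m := if_pos hbig
            rw [hA]
            have h1 := cost_le_m (m := m) hm0 (hg0 x)
            have hCx : Cost x = if g x ≤ m then g x - g x * Real.log (g x / m) else m := rfl
            rw [hCx]
            have := mul_le_mul_of_nonneg_left h1 (hπpos x).le
            linarith
          · have hA : A x = φ (g x) := if_neg hbig
            by_cases hsmall : g x ≤ 7/40 * m
            · have hWx : x ∉ W := by
                intro hc
                exact absurd (hWmem x hc).2.1 (not_lt.mpr hsmall)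
              rw [if_neg hWx, add_zero, hA]
              have hgm : g x ≤ m := by nlinarith [hm0]
              have h1 := cost_le_phi_small (m := m) hm0 (hg0 x) hsmall
              have hCx : Cost x = g x - g x * Real.log (g x / m) := if_pos hgm
              have hφg : φ (g x) = g x * Real.log (g x / m) - g x + m := rfl
              rw [hCx, hφg]
              have := mul_le_mul_of_nonneg_left h1 (hπpos x).le
              linarith
            · have hWx : x ∈ W := by
                rw [hWdef]
                exact Finset.mem_filter.mpr ⟨hxS, lt_of_not_ge hsmall, lt_of_not_ge hbig⟩
              rw [if_pos hWx, hA]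
              ring_nf
              exact le_refl _
        calc ∑ x ∈ S, π x * Cost x
            ≤ ∑ x ∈ S, (π x * A x + if x ∈ W then π x * (Cost x - φ (g x)) else 0) :=
              Finset.sum_le_sum hpt
          _ = (∑ x ∈ S, π x * A x) + ∑ x ∈ S, (if x ∈ W then π x * (Cost x - φ (g x)) else 0) :=
              Finset.sum_add_distrib
          _ = _ := by
              rw [Finset.sum_ite_mem, Finset.inter_eq_right.mpr hWS]
      -- B2 : charging
      have B2 : ∑ x ∈ W, π x * (Cost x - φ (g x)) ≤ ∑ z ∈ Zs, π z * (φ (f z) - m) := by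
        have hmaps : ∀ x ∈ W, zf x ∈ Zs := fun x hx => Finset.mem_image_of_mem zf hx
        rw [← Finset.sum_fiberwise_of_maps_to hmaps (fun x => π x * (Cost x - φ (g x)))]
        apply Finset.sum_le_sum
        intro z hz
        obtain ⟨x₀, hx₀W, hx₀z⟩ := Finset.mem_image.mp hz
        obtain ⟨hx₀S, hm₀1, hm₀2⟩ := hWmem x₀ hx₀W
        obtain ⟨hd₀1, hfz₀⟩ := hSz x₀ hx₀S
        rw [hx₀z] at hfz₀ hd₀1
        set d₀ := graphDist Q x₀ z with hd₀def
        have haux : ∀ (da db : ℕ) (u v : ℝ), da < db → 0 < u → 0 < v →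
            r ^ da * u = r ^ db * v → 7/40 * m < v → u < Real.exp 1 * m → False := by
          intro da db u v hab hu hv hequ hv1 hu2
          have hsplit : r ^ db = r ^ da * r ^ (db - da) := by
            rw [← pow_add]; congr 1; omega
          have hrda : (0:ℝ) < r ^ da := pow_pos hr0 da
          have hequ2 : r ^ da * u = r ^ da * (r ^ (db - da) * v) := by
            rw [hequ, hsplit]; ring
          have hu' : u = r ^ (db - da) * v := mul_left_cancel₀ (ne_of_gt hrda) hequ2
          have hpow : r ≤ r ^ (db - da) := le_self_pow₀ (by linarith) (by omega)
          have h16 : (16:ℝ) ≤ r ^ (db - da) := le_trans hr16 hpow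
          have hmul : 16 * (7/40 * m) ≤ r ^ (db - da) * v :=
            mul_le_mul h16 hv1.le (by positivity) (by positivity)
          nlinarith [he28, hm0]
        have hfib : ∀ x ∈ W.filter (fun x => zf x = z),
            graphDist Q x z = d₀ ∧ g x = g x₀ := by
          intro x hx
          obtain ⟨hxW, hxz⟩ := Finset.mem_filter.mp hx
          obtain ⟨hxS, hm1, hm2⟩ := hWmem x hxW
          obtain ⟨hd1, hfzx⟩ := hSz x hxS
          rw [hxz] at hfzx hd1
          have hkey : r ^ (graphDist Q x z) * g x = r ^ d₀ * g x₀ := by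
            rw [← hfzx, ← hfz₀]
          rcases lt_trichotomy (graphDist Q x z) d₀ with hlt | heq | hgt
          · exact absurd hkey (fun hk =>
              haux _ d₀ (g x) (g x₀) hlt (hg0 x) (hg0 x₀) hk hm₀1 hm2)
          · refine ⟨heq, ?_⟩
            rw [heq] at hkey
            exact mul_left_cancel₀ (ne_of_gt (pow_pos hr0 d₀)) hkey
          · exact absurd hkey.symm (fun hk =>
              haux d₀ _ (g x₀) (g x) hgt (hg0 x₀) (hg0 x) hk hm1 hm₀2)
        have hconst : ∀ x ∈ W.filter (fun x => zf x = z),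
            π x * (Cost x - φ (g x)) = π x * (Cost x₀ - φ (g x₀)) := by
          intro x hx
          have hgg := (hfib x hx).2
          have h1 : Cost x = if g x ≤ m then g x - g x * Real.log (g x / m) else m := rfl
          have h2 : Cost x₀ = if g x₀ ≤ m then g x₀ - g x₀ * Real.log (g x₀ / m) else m := rfl
          have hCx : Cost x = Cost x₀ := by rw [h1, h2, hgg]
          have hφx : φ (g x) = φ (g x₀) := by rw [hgg]
          rw [hCx, hφx]
        rw [Finset.sum_congr rfl hconst, ← Finset.sum_mul]
        have hfzbig : Real.exp 1 * m ≤ f z := by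
          rw [← hx₀z]; exact hrecip x₀ hx₀W
        have hφfz : φ (f z) = f z * Real.log (f z / m) - f z + m := rfl
        have hRHS0 : 0 ≤ φ (f z) - m := by
          have h3 := m_le_phi_big hm0 hfzbig
          rw [hφfz]
          linarith
        rcases le_or_gt (Cost x₀ - φ (g x₀)) 0 with hν0 | hν0
        · have hsum0 : 0 ≤ ∑ x ∈ W.filter (fun x => zf x = z), π x :=
            Finset.sum_nonneg (fun x _ => (hπpos x).le)
          nlinarith [mul_nonneg (hπpos z).le hRHS0]
        · have hsub : W.filter (fun x => zf x = z)
              ⊆ univ.filter (fun x => graphDist Q x z = d₀) := by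
            intro x hx
            exact Finset.mem_filter.mpr ⟨mem_univ x, (hfib x hx).1⟩
          have hsum : ∑ x ∈ W.filter (fun x => zf x = z), π x ≤ π z * ((1/p)^2)^d₀ := by
            calc ∑ x ∈ W.filter (fun x => zf x = z), π x
                ≤ ∑ x ∈ univ.filter (fun x => graphDist Q x z = d₀), π x :=
                  Finset.sum_le_sum_of_subset_of_nonneg hsub (fun x _ _ => (hπpos x).le)
              _ ≤ π z * ((1/p)^2)^d₀ := shell_bound π Q hQ hπpos hrev hirr hp0 z d₀
          have hrp : ((1:ℝ)/p)^2 = r / 4 := by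
            rw [hrdef]; field_simp
          have hks := key_scaled (m := m) (v := g x₀) (r := r) (d := d₀)
            hm0 (hg0 x₀) hr16 hd₀1 hm₀1 hm₀2
          rw [← hfz₀] at hks
          calc (∑ x ∈ W.filter (fun x => zf x = z), π x) * (Cost x₀ - φ (g x₀))
              ≤ (π z * ((1/p)^2)^d₀) * (Cost x₀ - φ (g x₀)) :=
                mul_le_mul_of_nonneg_right hsum hν0.le
            _ = π z * ((r/4)^d₀ * (Cost x₀ - φ (g x₀))) := by rw [hrp]; ring
            _ ≤ π z * (φ (f z) - m) := by
                apply mul_le_mul_of_nonneg_left _ (hπpos z).le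
                have hν : Cost x₀ - φ (g x₀)
                    = (if g x₀ ≤ m then g x₀ - g x₀ * Real.log (g x₀ / m) else m)
                      - (g x₀ * Real.log (g x₀ / m) - g x₀ + m) := rfl
                rw [hν, hφfz]
                linarith [hks]
      -- B3
      have hZf : ∀ z ∈ Zs, Real.exp 1 * m ≤ f z := by
        intro z hz
        obtain ⟨x₀, hx₀W, hx₀z⟩ := Finset.mem_image.mp hz
        have := hrecip x₀ hx₀W
        rwa [hx₀z] at this
      have B3 : (∑ x ∈ S, π x * A x) + (∑ z ∈ Zs, π z * (φ (f z) - m))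
          ≤ ∑ x, π x * φ (g x) := by
        have h1 : ∑ x ∈ S, π x * A x = ∑ x, if x ∈ S then π x * A x else 0 := by
          rw [Finset.sum_ite_mem, Finset.univ_inter]
        have h2 : ∑ z ∈ Zs, π z * (φ (f z) - m)
            = ∑ x, if x ∈ Zs then π x * (φ (f x) - m) else 0 := by
          rw [Finset.sum_ite_mem, Finset.univ_inter]
        rw [h1, h2, ← Finset.sum_add_distrib]
        apply Finset.sum_le_sum
        intro x _
        have hφg : φ (g x) = g x * Real.log (g x / m) - g x + m := rfl
        have hφf : φ (f x) = f x * Real.log (f x / m) - f x + m := rfl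
        by_cases hxZ : x ∈ Zs
        · have hfbig : Real.exp 1 * m ≤ f x := hZf x hxZ
          have hmf : m ≤ f x := by nlinarith [hm0, he1]
          have hmono := phi_mono (m := m) hm0 hmf (hgf x)
          rw [if_pos hxZ]
          by_cases hxS : x ∈ S
          · rw [if_pos hxS]
            have hA : A x = m := if_pos (le_trans hfbig (hgf x))
            rw [hA, hφf, hφg]
            have h5 := mul_le_mul_of_nonneg_left hmono (hπpos x).le
            nlinarith [hπpos x, h5]
          · rw [if_neg hxS, hφf, hφg]
            have h5 := mul_le_mul_of_nonneg_left hmono (hπpos x).le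
            nlinarith [hπpos x, hm0, h5]
        · rw [if_neg hxZ, add_zero]
          by_cases hxS : x ∈ S
          · rw [if_pos hxS]
            have hAle : A x ≤ φ (g x) := by
              by_cases hbig : Real.exp 1 * m ≤ g x
              · have hA : A x = m := if_pos hbig
                rw [hA, hφg]
                exact m_le_phi_big hm0 hbig
              · have hA : A x = φ (g x) := if_neg hbig
                rw [hA]
            exact mul_le_mul_of_nonneg_left hAle (hπpos x).le
          · rw [if_neg hxS]
            have := Phi_nonneg (hg0 x) hm0
            rw [hφg]
            nlinarith [hπpos x]
      calc ∑ x, π x * φ (f x)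
          ≤ (∑ x, π x * φ (g x)) + ∑ x ∈ S, π x * Cost x := sum1
        _ ≤ (∑ x, π x * φ (g x)) + ((∑ x ∈ S, π x * A x)
              + ∑ x ∈ W, π x * (Cost x - φ (g x))) := by linarith [B1]
        _ ≤ (∑ x, π x * φ (g x)) + ((∑ x ∈ S, π x * A x)
              + ∑ z ∈ Zs, π z * (φ (f z) - m)) := by linarith [B2]
        _ ≤ (∑ x, π x * φ (g x)) + (∑ x, π x * φ (g x)) := by linarith [B3]
        _ = 2 * ∑ x, π x * φ (g x) := by ring

    calc entropy π f ≤ ∑ x, π x * φ (f x) := E1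
      _ ≤ 2 * ∑ x, π x * φ (g x) := ledger
      _ = 2 * entropy π g := by rw [E3]


end
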